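/- Define rank(a) = ∑_{j=1}^{n−1} (a_j − η_j)(n − j) for a ∈ V_{n,d}^α, where η is the lex-smallest element of V_{n,d}^α. If a >_lex b is a sorted pair (so Δ(a,b) exists), then rank(a) = rank(b) + length(Δ(a,b)). -/
import Mathlib


/-- The set `V_{n,d}^α` of nonnegative integer tuples with coordinate sum `d`
and coordinatewise bound `α`. -/
def VT (n d : ℕ) (α : Fin n → ℕ) : Set (Fin n → ℕ) :=
  {c | (∑ i, c i) = d ∧ ∀ i, c i ≤ α i}

/-- `a >_lex b`: the leftmost nonzero entry of `a - b` is positive. -/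
def lexGT {n : ℕ} (a b : Fin n → ℕ) : Prop :=
  ∃ i : Fin n, (∀ j, j < i → a j = b j) ∧ b i < a i

/-- `sort(a,b) = (a,b)` for Sturmfels' sorting operator: for every `t`, the prefix
sum of `a` up to `t` equals the ceiling of half the prefix sum of `a + b`. -/
def sortedPair {n : ℕ} (a b : Fin n → ℕ) : Prop :=
  ∀ t : Fin n, 2 * (∑ i ∈ Finset.Iic t, a i)
    = (∑ i ∈ Finset.Iic t, (a i + b i)) + (∑ i ∈ Finset.Iic t, (a i + b i)) % 2

/-- The sorting signature set `Δ(a,b)` of a sorted pair, recorded (0-indexed) as the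
set of positions `t` where the prefix sum of `b` is one less than that of `a`. -/
def sigSet {n : ℕ} (a b : Fin n → ℕ) : Finset (Fin n) :=
  Finset.univ.filter (fun t => (∑ i ∈ Finset.Iic t, b i) + 1 = ∑ i ∈ Finset.Iic t, a i)

/-- Adjacency in the sorting graph `𝒢(d,α)`. -/
def adjG {n : ℕ} (a b : Fin n → ℕ) : Prop :=
  (lexGT a b ∧ sortedPair a b) ∨ (lexGT b a ∧ sortedPair b a)

/-- A clique of the sorting graph `𝒢(d,α)`. -/
def isClique (n d : ℕ) (α : Fin n → ℕ) (S : Finset (Fin n → ℕ)) : Prop :=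
  (↑S ⊆ VT n d α) ∧ ∀ a ∈ S, ∀ b ∈ S, a ≠ b → adjG a b

/-- A maximal clique of the sorting graph `𝒢(d,α)`. -/
def isMaxClique (n d : ℕ) (α : Fin n → ℕ) (S : Finset (Fin n → ℕ)) : Prop :=
  isClique n d α S ∧ ∀ T, isClique n d α T → S ⊆ T → S = T

/-- With `rank(a) = ∑_{j=1}^{n-1} (a_j - η_j)(n - j)`, if `a >_lex b` is a sorted
pair in `V_{n,d}^α` then `rank(a) = rank(b) + length(Δ(a,b))`. -/
theorem stmt13 (n d : ℕ) (hn : 3 ≤ n) (α : Fin n → ℕ)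
    (hα0 : 1 ≤ α ⟨0, by omega⟩) (hmono : Monotone α)
    (hαd : ∀ i, α i ≤ d) (hdα : d < ∑ i, α i)
    (η : Fin n → ℕ)
    (hη : ∀ i : Fin n, η i = min (α i) (d - ∑ j ∈ Finset.Ioi i, η j))
    (a b : Fin n → ℕ) (ha : a ∈ VT n d α) (hb : b ∈ VT n d α)
    (hlex : lexGT a b) (hsort : sortedPair a b) :
    (∑ j : Fin n, ((a j : ℤ) - (η j : ℤ)) * ((n : ℤ) - 1 - (j.1 : ℤ)))
      = (∑ j : Fin n, ((b j : ℤ) - (η j : ℤ)) * ((n : ℤ) - 1 - (j.1 : ℤ)))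
        + ((sigSet a b).card : ℤ) := by

  classical
  set f : Fin n → ℤ := fun j => (a j : ℤ) - (b j : ℤ) with hf
  -- per-position consequence of sortedness
  have key : ∀ t : Fin n, (∑ i ∈ Finset.Iic t, a i)
      = (∑ i ∈ Finset.Iic t, b i) + (∑ i ∈ Finset.Iic t, (a i + b i)) % 2 := by
    intro t
    have h := hsort t
    have hs : (∑ i ∈ Finset.Iic t, (a i + b i))
        = (∑ i ∈ Finset.Iic t, a i) + ∑ i ∈ Finset.Iic t, b i :=
      Finset.sum_add_distrib
    omega
  have hr1 : ∀ t : Fin n, (∑ i ∈ Finset.Iic t, (a i + b i)) % 2 ≤ 1 := fun t =>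
    Nat.le_of_lt_succ (Nat.mod_lt _ (by norm_num))
  -- card of sigSet as a sum of remainders
  have hcardN : (sigSet a b).card
      = ∑ t : Fin n, (∑ i ∈ Finset.Iic t, (a i + b i)) % 2 := by
    rw [sigSet, Finset.card_filter]
    refine Finset.sum_congr rfl fun t _ => ?_
    have h1 := key t
    have h2 := hr1 t
    by_cases h : (∑ i ∈ Finset.Iic t, b i) + 1 = ∑ i ∈ Finset.Iic t, a i
    · simp only [h, if_true]; omega
    · simp only [h, if_false]; omega
  have hcard : ((sigSet a b).card : ℤ)
      = ∑ t : Fin n, (((∑ i ∈ Finset.Iic t, (a i + b i)) % 2 : ℕ) : ℤ) := by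
    rw [hcardN]; push_cast; rfl
  -- prefix-sum differences
  have hsum : ∑ t : Fin n, ((∑ i ∈ Finset.Iic t, a i : ℤ) - (∑ i ∈ Finset.Iic t, b i : ℤ))
      = ((sigSet a b).card : ℤ) := by
    rw [hcard]
    refine Finset.sum_congr rfl fun t _ => ?_
    have := key t
    rw [← Nat.cast_sum, ← Nat.cast_sum]
    omega
  -- Abel summation: swap the double sum
  have habel : ∑ t : Fin n, (∑ i ∈ Finset.Iic t, f i)
      = ∑ j : Fin n, f j * ((n : ℤ) - (j.1 : ℤ)) := by
    have : ∀ t : Fin n, (∑ i ∈ Finset.Iic t, f i)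
        = ∑ i : Fin n, if i ≤ t then f i else 0 := by
      intro t
      rw [show Finset.Iic t = Finset.univ.filter (· ≤ t) by ext x; simp,
        Finset.sum_filter]
    simp_rw [this]
    rw [Finset.sum_comm]
    refine Finset.sum_congr rfl fun i _ => ?_
    rw [← Finset.sum_filter]
    have hfi : (Finset.univ.filter fun t : Fin n => i ≤ t) = Finset.Ici i := by
      ext t; simp
    rw [Finset.sum_const, hfi, Fin.card_Ici]
    have : ((n - i.1 : ℕ) : ℤ) = (n : ℤ) - (i.1 : ℤ) := by
      have := i.2; push_cast [Nat.cast_sub (le_of_lt i.2)]; ring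
    rw [nsmul_eq_mul, this]
    ring
  -- total sums equal
  have htot : ∑ j : Fin n, f j = 0 := by
    have ha' : (∑ i, a i) = d := ha.1
    have hb' : (∑ i, b i) = d := hb.1
    have : ∑ j : Fin n, f j = ((∑ i, a i : ℕ) : ℤ) - ((∑ i, b i : ℕ) : ℤ) := by
      push_cast [hf]
      rw [Finset.sum_sub_distrib]
    rw [this, ha', hb']; ring
  have hmain : ∑ j : Fin n, f j * ((n : ℤ) - 1 - (j.1 : ℤ)) = ((sigSet a b).card : ℤ) := by
    have expand : ∑ j : Fin n, f j * ((n : ℤ) - 1 - (j.1 : ℤ))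
        = (∑ j : Fin n, f j * ((n : ℤ) - (j.1 : ℤ))) - ∑ j : Fin n, f j := by
      rw [← Finset.sum_sub_distrib]
      refine Finset.sum_congr rfl fun j _ => by ring
    rw [expand, htot, ← habel, ← hsum]
    simp only [sub_zero]
    refine Finset.sum_congr rfl fun t _ => ?_
    push_cast [hf]
    rw [Finset.sum_sub_distrib]
  have final : ∑ j : Fin n, ((a j : ℤ) - (η j : ℤ)) * ((n : ℤ) - 1 - (j.1 : ℤ))
      - ∑ j : Fin n, ((b j : ℤ) - (η j : ℤ)) * ((n : ℤ) - 1 - (j.1 : ℤ))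
      = ∑ j : Fin n, f j * ((n : ℤ) - 1 - (j.1 : ℤ)) := by
    rw [← Finset.sum_sub_distrib]
    refine Finset.sum_congr rfl fun j _ => ?_
    simp only [hf]; ring
  linarith [final, hmain]
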